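/- Let X ≥ 0 be a random variable with CDF F satisfying F(v_α) = 1−α, and suppose F satisfies γ·u ≤ |F(v_α + u) − F(v_α)| for all |u| ≤ 1 with γ > 0. Let Y₁,…,Yₙ be i.i.d. copies of X and set V̂ = Y*_{⌊(1−α)n⌋} (the empirical (1−α)-quantile). Then for any 0 < ε ≤ 1, P(V̂ − v_α > ε) ≤ exp(−2n(γε)²). -/

import Mathlib

open MeasureTheory ProbabilityTheory Real

section Aux

private noncomputable def aA (p t : ℝ) : ℝ := (1 - p) * exp (t * p) + p * exp (t * (p - 1))
private noncomputable def aA1 (p t : ℝ) : ℝ :=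
  p * ((1 - p) * exp (t * p)) + (p - 1) * (p * exp (t * (p - 1)))
private noncomputable def gg (p t : ℝ) : ℝ := t ^ 2 / 8 - Real.log (aA p t)
private noncomputable def gg1 (p t : ℝ) : ℝ := t / 4 - aA1 p t / aA p t
private noncomputable def DD (p t : ℝ) : ℝ :=
  1 / 4 - ((p * (p * ((1 - p) * exp (t * p))) + (p - 1) * ((p - 1) * (p * exp (t * (p - 1))))) * aA p t
        - aA1 p t * aA1 p t) / (aA p t) ^ 2

private lemma hasDerivAt_term (c d t : ℝ) :
    HasDerivAt (fun t => d * exp (t * c)) (c * (d * exp (t * c))) t := by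
  have h : HasDerivAt (fun t : ℝ => t * c) c t := by simpa using (hasDerivAt_id t).mul_const c
  simpa [mul_comm, mul_assoc, mul_left_comm] using h.exp.const_mul d

private lemma aA_pos {p : ℝ} (h0 : 0 < p) (h1 : p < 1) (t : ℝ) : 0 < aA p t := by
  have := exp_pos (t * p); have := exp_pos (t * (p - 1))
  unfold aA; nlinarith

private lemma hasDerivAt_aA (p t : ℝ) : HasDerivAt (aA p) (aA1 p t) t :=
  (hasDerivAt_term p (1 - p) t).add (hasDerivAt_term (p - 1) p t)

private lemma hasDerivAt_aA1 (p t : ℝ) :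
    HasDerivAt (aA1 p)
      (p * (p * ((1 - p) * exp (t * p))) + (p - 1) * ((p - 1) * (p * exp (t * (p - 1))))) t :=
  ((hasDerivAt_term p (1 - p) t).const_mul p).add ((hasDerivAt_term (p - 1) p t).const_mul (p - 1))

private lemma hasDerivAt_gg {p : ℝ} (h0 : 0 < p) (h1 : p < 1) (t : ℝ) :
    HasDerivAt (gg p) (gg1 p t) t := by
  have hA := hasDerivAt_aA p t
  have hlog := hA.log (aA_pos h0 h1 t).ne'
  have hsq : HasDerivAt (fun t : ℝ => t ^ 2 / 8) (t / 4) t := by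
    have := (hasDerivAt_pow 2 t).div_const 8
    simpa using this.congr_deriv (by ring)
  exact hsq.sub hlog

private lemma hasDerivAt_gg1 {p : ℝ} (h0 : 0 < p) (h1 : p < 1) (t : ℝ) :
    HasDerivAt (gg1 p) (DD p t) t := by
  have hq := (hasDerivAt_aA1 p t).div (hasDerivAt_aA p t) (aA_pos h0 h1 t).ne'
  have hlin : HasDerivAt (fun t : ℝ => t / 4) (1 / 4) t := by
    simpa using (hasDerivAt_id t).div_const 4
  exact hlin.sub hq

private lemma DD_nonneg {p : ℝ} (h0 : 0 < p) (h1 : p < 1) (t : ℝ) : 0 ≤ DD p t := by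
  unfold DD
  set a := (1 - p) * exp (t * p) with ha
  set b := p * exp (t * (p - 1)) with hb
  have hApos := aA_pos h0 h1 t
  have haA : aA p t = a + b := rfl
  have haA1 : aA1 p t = p * a + (p - 1) * b := rfl
  have hnum : (p * (p * a) + (p - 1) * ((p - 1) * b)) * aA p t - aA1 p t * aA1 p t = a * b := by
    rw [haA, haA1]; ring
  rw [hnum, sub_nonneg, div_le_iff₀ (by positivity)]
  nlinarith [sq_nonneg (a - b), hApos]

private lemma gg_zero (p : ℝ) : gg p 0 = 0 := by
  unfold gg aA; norm_num

private lemma gg1_zero (p : ℝ) : gg1 p 0 = 0 := by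
  unfold gg1 aA1 aA; norm_num; ring_nf

private lemma gg_nonneg {p : ℝ} (h0 : 0 < p) (h1 : p < 1) (t : ℝ) : 0 ≤ gg p t := by
  have hmono : Monotone (gg1 p) := by
    apply monotone_of_deriv_nonneg
    · exact fun x => (hasDerivAt_gg1 h0 h1 x).differentiableAt
    · intro x; rw [(hasDerivAt_gg1 h0 h1 x).deriv]; exact DD_nonneg h0 h1 x
  have hcont : ∀ s : Set ℝ, ContinuousOn (gg p) s :=
    fun s => (fun x _ => (hasDerivAt_gg h0 h1 x).differentiableAt.continuousAt.continuousWithinAt)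
  rcases lt_trichotomy t 0 with ht | ht | ht
  · obtain ⟨c, hc, hslope⟩ := exists_hasDerivAt_eq_slope (gg p) (gg1 p) ht (hcont _)
      (fun x _ => hasDerivAt_gg h0 h1 x)
    have hc0 : gg1 p c ≤ 0 := by
      rw [← gg1_zero p]; exact hmono hc.2.le
    rw [gg_zero] at hslope
    have h2 : (0 - gg p t) / (0 - t) ≤ 0 := hslope ▸ hc0
    rw [div_nonpos_iff] at h2
    rcases h2 with ⟨h, _⟩ | ⟨_, h⟩ <;> linarith
  · simp [ht, gg_zero]
  · obtain ⟨c, hc, hslope⟩ := exists_hasDerivAt_eq_slope (gg p) (gg1 p) ht (hcont _)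
      (fun x _ => hasDerivAt_gg h0 h1 x)
    have hc0 : 0 ≤ gg1 p c := by rw [← gg1_zero p]; exact hmono hc.1.le
    rw [gg_zero] at hslope
    have h2 : 0 ≤ (gg p t - 0) / (t - 0) := hslope ▸ hc0
    rcases div_nonneg_iff.mp h2 with ⟨h, _⟩ | ⟨_, h⟩ <;> linarith

/-- Hoeffding's lemma for Bernoulli distributions. -/
private lemma bernoulli_mgf_le {p : ℝ} (h0 : 0 ≤ p) (h1 : p ≤ 1) (t : ℝ) :
    (1 - p) * exp (t * p) + p * exp (t * (p - 1)) ≤ exp (t ^ 2 / 8) := by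
  rcases h0.eq_or_lt with rfl | h0'
  · simpa using one_le_exp (by positivity)
  rcases h1.eq_or_lt with rfl | h1'
  · simpa using one_le_exp (by positivity)
  have h := gg_nonneg h0' h1' t
  unfold gg at h
  have hApos := aA_pos h0' h1' t
  have : aA p t ≤ exp (t ^ 2 / 8) := by
    rw [← exp_log hApos]; exact exp_le_exp.mpr (by linarith)
  exact this


lemma sum_ind_eq_countP (n : ℕ) (f : Fin n → ℝ) (c : ℝ) :
    (∑ i : Fin n, if f i ≤ c then (1:ℝ) else 0) =
      ((List.ofFn f).countP (fun x => decide (x ≤ c)) : ℝ) := by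
  induction n with
  | zero => simp
  | succ m ih =>
      rw [Fin.sum_univ_succ, List.ofFn_succ, List.countP_cons, ih]
      by_cases h : f 0 ≤ c <;> simp [h] <;> ring

lemma count_le_of_sorted_getD (l : List ℝ) (hl : l.Pairwise (· ≤ ·)) (j : ℕ) (hj : j < l.length)
    (c : ℝ) (hc : c < l.getD j 0) : l.countP (fun x => decide (x ≤ c)) ≤ j := by
  have hsplit : l = l.take j ++ l.drop j := (List.take_append_drop j l).symm
  rw [hsplit, List.countP_append]
  have h2 : (l.drop j).countP (fun x => decide (x ≤ c)) = 0 := by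
    rw [List.countP_eq_zero]
    intro a ha
    obtain ⟨i, hi, rfl⟩ := List.mem_iff_getElem.mp ha
    have hlen : j + i < l.length := by
      have h' : i < l.length - j := by simpa using hi
      omega
    rw [List.getElem_drop]
    have hji : l[j] ≤ l[j + i] := by
      have := hl.rel_get_of_le (a := ⟨j, hj⟩) (b := ⟨j + i, hlen⟩) (by simp)
      simpa using this
    have : l.getD j 0 = l[j] := List.getD_eq_getElem l 0 hj
    simp only [decide_eq_true_eq]
    push_neg
    linarith [hc, hji, this ▸ hc]
  have h1 : (l.take j).countP (fun x => decide (x ≤ c)) ≤ j := by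
    calc _ ≤ (l.take j).length := List.countP_le_length
    _ ≤ j := by simp [List.length_take]
  omega

end Aux

/-- Under the γ-growth condition on the CDF near `v_α`, the empirical
`(1-α)`-quantile `V̂` built from `n` i.i.d. copies satisfies
`P(V̂ - v_α > ε) ≤ exp(-2n(γε)²)` for any `0 < ε ≤ 1`. -/
theorem empirical_quantile_upper_deviation {Ω : Type*} [MeasurableSpace Ω]
    (μ : Measure Ω) [IsProbabilityMeasure μ] (n : ℕ) (hn : 0 < n)
    (F : ℝ → ℝ) (hFcont : Continuous F)
    (α : ℝ) (hα0 : 0 < α) (hα1 : α < 1)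
    (vα : ℝ) (hvα : vα = sInf {u : ℝ | 1 - α ≤ F u})
    (hFvα : F vα = 1 - α)
    (γ : ℝ) (hγ : 0 < γ)
    (hgrowth : ∀ u : ℝ, |u| ≤ 1 → γ * u ≤ |F (vα + u) - F vα|)
    (Y : Fin n → Ω → ℝ) (hYmeas : ∀ i, Measurable (Y i))
    (hYnonneg : ∀ i ω, 0 ≤ Y i ω)
    (hindep : iIndepFun Y μ)
    (hF : ∀ i u, F u = (μ {ω | Y i ω ≤ u}).toReal)
    (Vhat : Ω → ℝ)
    (hVhat : ∀ ω, Vhat ω =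
      ((List.ofFn fun i => Y i ω).mergeSort (· ≤ ·)).getD (⌊(1 - α) * n⌋₊ - 1) 0)
    (ε : ℝ) (hε0 : 0 < ε) (hε1 : ε ≤ 1) :
    μ {ω | Vhat ω - vα > ε} ≤ ENNReal.ofReal (Real.exp (-2 * n * (γ * ε) ^ 2)) := by
  classical
  have i0 : Fin n := ⟨0, hn⟩
  set c : ℝ := vα + ε with hcdef
  set p : ℝ := F c with hpdef
  have hmeasS : ∀ i, MeasurableSet {ω | Y i ω ≤ c} := fun i => (hYmeas i) measurableSet_Iic
  have hμS : ∀ i, (μ {ω | Y i ω ≤ c}).toReal = p := fun i => (hF i c).symm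
  have hp0 : 0 ≤ p := by rw [hpdef, hF i0 c]; exact ENNReal.toReal_nonneg
  have hp1 : p ≤ 1 := by
    rw [hpdef, hF i0 c]
    simpa using ENNReal.toReal_mono ENNReal.one_ne_top prob_le_one
  have hFmono : Monotone F := by
    intro u v huv
    rw [hF i0 u, hF i0 v]
    exact ENNReal.toReal_mono (measure_ne_top μ _) (measure_mono fun ω h => le_trans h huv)
  have hpγ : 1 - α + γ * ε ≤ p := by
    have h := hgrowth ε (by rwa [abs_of_pos hε0])
    have h2 : F vα ≤ F (vα + ε) := hFmono (by linarith)
    rw [abs_of_nonneg (by linarith)] at h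
    rw [hpdef, hcdef]; linarith
  set t : ℝ := 4 * (γ * ε) with htdef
  have ht0 : 0 ≤ t := by positivity
  set Z : Fin n → Ω → ℝ := fun i ω => p - if Y i ω ≤ c then 1 else 0 with hZdef
  have hZmeas : ∀ i, Measurable (Z i) := fun i =>
    measurable_const.sub (Measurable.ite (hmeasS i) measurable_const measurable_const)
  have hZindep : iIndepFun Z μ := by
    have hφ : Measurable (fun x : ℝ => p - if x ≤ c then (1:ℝ) else 0) :=
      measurable_const.sub (Measurable.ite measurableSet_Iic measurable_const measurable_const)
    exact hindep.comp (fun _ => fun x : ℝ => p - if x ≤ c then (1:ℝ) else 0) (fun _ => hφ)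
  have hfun : ∀ i, (fun ω => exp (t * Z i ω)) =
      (fun ω => Set.indicator {ω | Y i ω ≤ c} (fun _ => exp (t * (p - 1))) ω
        + Set.indicator {ω | Y i ω ≤ c}ᶜ (fun _ => exp (t * p)) ω) := by
    intro i; funext ω
    by_cases h : Y i ω ≤ c
    · simp [hZdef, h, Set.indicator_of_mem (show ω ∈ {ω | Y i ω ≤ c} from h),
        Set.indicator_of_notMem (show ω ∉ {ω | Y i ω ≤ c}ᶜ by simp [h])]
    · simp [hZdef, h, Set.indicator_of_notMem (show ω ∉ {ω | Y i ω ≤ c} from h),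
        Set.indicator_of_mem (show ω ∈ {ω | Y i ω ≤ c}ᶜ by simp [h])]
  have hint : ∀ i, Integrable (fun ω => exp (t * Z i ω)) μ := by
    intro i; rw [hfun i]
    exact ((integrable_const _).indicator (hmeasS i)).add
      ((integrable_const _).indicator (hmeasS i).compl)
  have hcompl : ∀ i, (μ {ω | Y i ω ≤ c}ᶜ).toReal = 1 - p := by
    intro i
    rw [measure_compl (hmeasS i) (measure_ne_top μ _), measure_univ,
      ENNReal.toReal_sub_of_le prob_le_one ENNReal.one_ne_top, hμS i, ENNReal.toReal_one]
  have hmgf : ∀ i, mgf (Z i) μ t = (1 - p) * exp (t * p) + p * exp (t * (p - 1)) := by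
    intro i
    rw [mgf, hfun i, integral_add ((integrable_const _).indicator (hmeasS i))
        ((integrable_const _).indicator (hmeasS i).compl),
      integral_indicator_const _ (hmeasS i), integral_indicator_const _ (hmeasS i).compl,
      measureReal_def, measureReal_def, hμS i, hcompl i]
    simp [smul_eq_mul]; ring
  have hWint : Integrable (fun ω => exp (t * (∑ i, Z i) ω)) μ :=
    hZindep.integrable_exp_mul_sum hZmeas (fun i _ => hint i)
  have hcher := measure_ge_le_exp_mul_mgf (X := ∑ i, Z i) (μ := μ) (t := t)
    ((n : ℝ) * (γ * ε)) ht0 hWint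
  have hmgfW : mgf (∑ i, Z i) μ t ≤ exp (t ^ 2 / 8) ^ n := by
    rw [hZindep.mgf_sum hZmeas Finset.univ]
    calc ∏ i : Fin n, mgf (Z i) μ t ≤ ∏ _i : Fin n, exp (t ^ 2 / 8) := by
          refine Finset.prod_le_prod (fun i _ => mgf_nonneg) (fun i _ => ?_)
          rw [hmgf i]; exact bernoulli_mgf_le hp0 hp1 t
      _ = exp (t ^ 2 / 8) ^ n := by rw [Finset.prod_const, Finset.card_univ, Fintype.card_fin]
  have key : (μ {ω | (n : ℝ) * (γ * ε) ≤ (∑ i, Z i) ω}).toReal ≤ exp (-2 * n * (γ * ε) ^ 2) := by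
    calc (μ {ω | (n : ℝ) * (γ * ε) ≤ (∑ i, Z i) ω}).toReal
        ≤ exp (-t * ((n : ℝ) * (γ * ε))) * mgf (∑ i, Z i) μ t := hcher
      _ ≤ exp (-t * ((n : ℝ) * (γ * ε))) * exp (t ^ 2 / 8) ^ n := by
          exact mul_le_mul_of_nonneg_left hmgfW (exp_pos _).le
      _ = exp (-2 * n * (γ * ε) ^ 2) := by
          rw [← Real.exp_nat_mul, ← Real.exp_add]
          congr 1; rw [htdef]; ring
  have hsub : {ω | Vhat ω - vα > ε} ⊆ {ω | (n : ℝ) * (γ * ε) ≤ (∑ i, Z i) ω} := by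
    intro ω hω
    simp only [Set.mem_setOf_eq] at hω ⊢
    set l' := (List.ofFn fun i => Y i ω).mergeSort (· ≤ ·) with hl'
    have hlen : l'.length = n := by rw [hl', List.length_mergeSort, List.length_ofFn]
    have hsorted : l'.Pairwise (· ≤ ·) := List.pairwise_mergeSort' _ _
    set k : ℕ := ⌊(1 - α) * (n : ℝ)⌋₊ with hk
    have hkle : (k : ℝ) ≤ (1 - α) * n := by
      refine Nat.floor_le ?_
      have h0 : (0:ℝ) ≤ (n:ℝ) := Nat.cast_nonneg n
      nlinarith
    have hkn : k - 1 < n := by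
      have h1 : (k : ℝ) < (n : ℝ) := by
        refine lt_of_le_of_lt hkle ?_
        have : (0:ℝ) < n := by exact_mod_cast hn
        nlinarith
      have : k < n := by exact_mod_cast h1
      omega
    have hVg : c < l'.getD (k - 1) 0 := by
      have := hVhat ω
      rw [this] at hω
      rw [hcdef]; linarith [hω]
    have hcount : l'.countP (fun x => decide (x ≤ c)) ≤ k - 1 :=
      count_le_of_sorted_getD l' hsorted (k - 1) (by omega) c hVg
    have hperm : l'.countP (fun x => decide (x ≤ c))
        = (List.ofFn fun i => Y i ω).countP (fun x => decide (x ≤ c)) :=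
      (List.mergeSort_perm _ _).countP_eq _
    have hsum := sum_ind_eq_countP n (fun i => Y i ω) c
    have hcntle : (∑ i : Fin n, if Y i ω ≤ c then (1:ℝ) else 0) ≤ (1 - α) * n := by
      rw [hsum, ← hperm]
      calc ((l'.countP (fun x => decide (x ≤ c)) : ℕ) : ℝ) ≤ ((k - 1 : ℕ) : ℝ) := by
            exact_mod_cast hcount
        _ ≤ (k : ℝ) := by exact_mod_cast Nat.cast_le.mpr (Nat.sub_le k 1)
        _ ≤ (1 - α) * n := hkle
    have hW : (∑ i, Z i) ω = (n : ℝ) * p - ∑ i : Fin n, (if Y i ω ≤ c then (1:ℝ) else 0) := by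
      rw [Finset.sum_apply]
      simp only [hZdef]
      rw [Finset.sum_sub_distrib, Finset.sum_const, Finset.card_univ, Fintype.card_fin,
        nsmul_eq_mul]
    rw [hW]
    have hnp : (n : ℝ) * (1 - α + γ * ε) ≤ (n : ℝ) * p :=
      mul_le_mul_of_nonneg_left hpγ (Nat.cast_nonneg n)
    nlinarith [hcntle, hnp]
  calc μ {ω | Vhat ω - vα > ε} ≤ μ {ω | (n : ℝ) * (γ * ε) ≤ (∑ i, Z i) ω} := measure_mono hsub
    _ = ENNReal.ofReal (μ {ω | (n : ℝ) * (γ * ε) ≤ (∑ i, Z i) ω}).toReal :=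
        (ENNReal.ofReal_toReal (measure_ne_top μ _)).symm
    _ ≤ ENNReal.ofReal (Real.exp (-2 * n * (γ * ε) ^ 2)) := ENNReal.ofReal_le_ofReal key
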